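/- Let V be a vector space over ℂ, let I be a set, and let (e_i)_{i∈I} be a family of locally nilpotent linear endomorphisms of V. For v ∈ V with v ≠ 0 set l_i(v) = max{ l ∈ ℕ : e_i^l(v) ≠ 0 }, set l_i(0) = −∞, and for l ≥ 0 let V_i^{<l} = { v ∈ V : l_i(v) < l } (a linear subspace of V). Let B ⊆ V be a basis of V equipped with maps ẽ_i, f̃_i : B → B ⊔ {0} for each i ∈ I such that: (i) for b, b′ ∈ B one has f̃_i(b) = b′ if and only if ẽ_i(b′) = b; (ii) ẽ_i(b) ≠ 0 if and only if e_i(b) ≠ 0; (iii) if e_i(b) ≠ 0 then e_i(b) ∈ ℂ^× · ẽ_i(b) + V_i^{< l_i(b) − 1}, i.e. there exist a nonzero scalar c and an element w with l_i(w) < l_i(b) − 1 such that e_i(b) = c·ẽ_i(b) + w. Then the set B⁺ = { b ∈ B : e_i(b) = 0 for all i ∈ I } is a basis of the subspace V⁺ = { v ∈ V : e_i(v) = 0 for all i ∈ I }. -/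

import Mathlib

open Set

private lemma pow_apply_zero_mono {V : Type*} [AddCommGroup V] [Module ℂ V]
    (f : Module.End ℂ V) {v : V} {l m : ℕ} (h : (f ^ l) v = 0) (hlm : l ≤ m) :
    (f ^ m) v = 0 := by
  obtain ⟨k, rfl⟩ := Nat.exists_eq_add_of_le hlm
  rw [add_comm, pow_add, Module.End.mul_apply, h, map_zero]

private lemma bddAbove_pow_ne_zero {V : Type*} [AddCommGroup V] [Module ℂ V]
    (f : Module.End ℂ V) (hf : ∀ v : V, ∃ l : ℕ, (f ^ l) v = 0) (v : V) :
    BddAbove {l : ℕ | (f ^ l) v ≠ 0} := by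
  obtain ⟨l₀, hl₀⟩ := hf v
  refine ⟨l₀, fun l hl => ?_⟩
  by_contra h
  exact hl (pow_apply_zero_mono f hl₀ (le_of_not_ge h))

/-- perfect bases, Berenstein–Kazhdan / Lemma `basis` of the paper. -/
theorem perfect_basis_primitive_elements_basis_of_primitive_vectors
    {V : Type*} [AddCommGroup V] [Module ℂ V] {I : Type*}
    (e : I → Module.End ℂ V)
    (hnil : ∀ (i : I) (v : V), ∃ l : ℕ, (e i ^ l) v = 0)
    {ι : Type*} (b : Module.Basis ι ℂ V)
    (etilde ftilde : I → ι → Option ι)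
    (h1 : ∀ (i : I) (j j' : ι), ftilde i j = some j' ↔ etilde i j' = some j)
    (h2 : ∀ (i : I) (j : ι), etilde i j ≠ none ↔ e i (b j) ≠ 0)
    (h3 : ∀ (i : I) (j : ι), e i (b j) ≠ 0 →
      ∃ j' : ι, etilde i j = some j' ∧ ∃ c : ℂ, c ≠ 0 ∧ ∃ w : V,
        (e i ^ (sSup {l : ℕ | (e i ^ l) (b j) ≠ 0} - 1)) w = 0 ∧
        e i (b j) = c • b j' + w) :
    LinearIndependent ℂ
      ((↑) : {v : V | v ∈ Set.range ⇑b ∧ ∀ i : I, e i v = 0} → V) ∧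
    Submodule.span ℂ {v : V | v ∈ Set.range ⇑b ∧ ∀ i : I, e i v = 0}
      = ⨅ i : I, LinearMap.ker (e i) := by
  classical
  constructor
  · exact b.linearIndependent.linearIndepOn_id.mono (fun v hv => hv.1)
  · apply le_antisymm
    · rw [Submodule.span_le]
      intro v hv
      simp only [SetLike.mem_coe, Submodule.mem_iInf, LinearMap.mem_ker]
      exact hv.2
    · intro v hv
      simp only [Submodule.mem_iInf, LinearMap.mem_ker] at hv
      -- key claim: every basis vector in the support of `v` is primitive
      have key : ∀ j ∈ (b.repr v).support, ∀ i : I, e i (b j) = 0 := by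
        by_contra hcon
        push_neg at hcon
        obtain ⟨j₀, hj₀, i, hij₀⟩ := hcon
        -- set up the length function for this `i`
        set L : ι → ℕ := fun j => sSup {l : ℕ | (e i ^ l) (b j) ≠ 0} with hL
        have hbdd : ∀ j, BddAbove {l : ℕ | (e i ^ l) (b j) ≠ 0} :=
          fun j => bddAbove_pow_ne_zero (e i) (hnil i) (b j)
        have hmem : ∀ j, (e i ^ L j) (b j) ≠ 0 := by
          intro j
          exact Nat.sSup_mem ⟨0, by simpa using b.ne_zero j⟩ (hbdd j)
        have hle : ∀ j (k : ℕ), (e i ^ k) (b j) ≠ 0 → k ≤ L j :=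
          fun j k hk => le_csSup (hbdd j) hk
        have hgt : ∀ j (k : ℕ), L j < k → (e i ^ k) (b j) = 0 := by
          intro j k hk
          by_contra h
          exact absurd (hle j k h) (not_le.2 hk)
        -- iteration of etilde
        set F : Option ι → Option ι := fun o => o.bind (etilde i) with hF
        have Finj : ∀ (k : ℕ) (j₁ j₂ m : ι), F^[k] (some j₁) = some m →
            F^[k] (some j₂) = some m → j₁ = j₂ := by
          intro k
          induction k with
          | zero => intro j₁ j₂ m h₁ h₂; simp at h₁ h₂; rw [h₁, h₂]
          | succ k ih =>
            intro j₁ j₂ m h₁ h₂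
            rw [Function.iterate_succ_apply'] at h₁ h₂
            obtain ⟨p₁, hp₁, hp₁'⟩ : ∃ p, F^[k] (some j₁) = some p ∧ etilde i p = some m := by
              rcases ho : F^[k] (some j₁) with _ | p
              · rw [ho] at h₁; simp [hF] at h₁
              · rw [ho] at h₁; exact ⟨p, rfl, h₁⟩
            obtain ⟨p₂, hp₂, hp₂'⟩ : ∃ p, F^[k] (some j₂) = some p ∧ etilde i p = some m := by
              rcases ho : F^[k] (some j₂) with _ | p
              · rw [ho] at h₂; simp [hF] at h₂
              · rw [ho] at h₂; exact ⟨p, rfl, h₂⟩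
            have : p₁ = p₂ := by
              have e₁ : ftilde i m = some p₁ := (h1 i m p₁).2 hp₁'
              have e₂ : ftilde i m = some p₂ := (h1 i m p₂).2 hp₂'
              exact Option.some.inj (e₁ ▸ e₂)
            exact ih j₁ j₂ p₁ hp₁ (by rw [hp₂, this])
        -- main iteration lemma
        have iter : ∀ (k m : ℕ) (j : ι), L j = k + m →
            ∃ j' : ι, F^[k] (some j) = some j' ∧ L j' = m ∧
              ∃ c : ℂ, c ≠ 0 ∧ ∃ w : V, (e i ^ m) w = 0 ∧
                (e i ^ k) (b j) = c • b j' + w := by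
          intro k
          induction k with
          | zero =>
            intro m j hj
            exact ⟨j, rfl, by simpa using hj, 1, one_ne_zero, 0, map_zero _, by simp⟩
          | succ k ih =>
            intro m j hj
            obtain ⟨j', hj'it, hj'L, c, hc, w, hw, heq⟩ := ih (m + 1) j (by omega)
            have hbj' : e i (b j') ≠ 0 := by
              intro h0
              have : (e i ^ L j') (b j') = 0 := by
                have : (e i ^ (1 : ℕ)) (b j') = 0 := by simpa using h0
                exact pow_apply_zero_mono (e i) this (by omega)
              exact hmem j' this
            obtain ⟨j'', hj''et, c', hc', w', hw', heq'⟩ := h3 i j' hbj'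
            rw [show sSup {l : ℕ | (e i ^ l) (b j') ≠ 0} = m + 1 from hj'L,
              Nat.add_sub_cancel] at hw'
            -- L j'' = m
            have hm1 : (e i ^ (m + 1)) (b j') ≠ 0 := hj'L ▸ hmem j'
            have hexp : (e i ^ (m + 1)) (b j') = c' • (e i ^ m) (b j'') + (e i ^ m) w' := by
              rw [pow_succ, Module.End.mul_apply, heq', map_add, map_smul]
            have hj''ne : (e i ^ m) (b j'') ≠ 0 := by
              intro h0
              rw [hexp, h0, hw', smul_zero, add_zero] at hm1
              exact hm1 rfl
            have hj''zero : (e i ^ (m + 1)) (b j'') = 0 := by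
              have h2' : (e i ^ (m + 2)) (b j') = 0 := hgt j' (m + 2) (by omega)
              have hexp2 : (e i ^ (m + 2)) (b j') =
                  c' • (e i ^ (m + 1)) (b j'') + (e i ^ (m + 1)) w' := by
                have : (m + 2) = (m + 1) + 1 := rfl
                rw [this, pow_succ, Module.End.mul_apply, heq', map_add, map_smul]
              have hw'1 : (e i ^ (m + 1)) w' = 0 := pow_apply_zero_mono (e i) hw' (by omega)
              rw [hexp2, hw'1, add_zero] at h2'
              exact (smul_eq_zero.1 h2').resolve_left hc'
            have hLj'' : L j'' = m := by
              have h₁ : m ≤ L j'' := hle j'' m hj''ne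
              have h₂ : L j'' ≤ m := by
                by_contra h
                exact hmem j'' (pow_apply_zero_mono (e i) hj''zero (by omega))
              omega
            refine ⟨j'', ?_, hLj'', c * c', mul_ne_zero hc hc', c • w' + (e i) w, ?_, ?_⟩
            · rw [Function.iterate_succ_apply', hj'it]
              simpa [hF] using hj''et
            · rw [map_add, map_smul, hw', smul_zero, zero_add]
              have : (e i ^ m) ((e i) w) = (e i ^ (m + 1)) w := by
                rw [pow_succ, Module.End.mul_apply]
              rw [this, hw]
            · rw [pow_succ', Module.End.mul_apply, heq, map_add, map_smul, heq']
              rw [smul_add, smul_smul]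
              module
        -- choose the maximal length N over the support
        set s := (b.repr v).support with hs
        have hsne : s.Nonempty := ⟨j₀, hj₀⟩
        set N := s.sup L with hN
        have hN1 : 1 ≤ N := by
          have : 1 ≤ L j₀ := hle j₀ 1 (by simpa using hij₀)
          exact le_trans this (Finset.le_sup hj₀)
        obtain ⟨j₁, hj₁s, hj₁N⟩ := Finset.exists_mem_eq_sup s hsne L
        obtain ⟨j₁', hj₁'it, _, c₁, hc₁, w₁, hw₁, heq₁⟩ := iter N 0 j₁ (by omega)
        simp only [pow_zero, Module.End.one_apply] at hw₁
        rw [hw₁, add_zero] at heq₁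
        -- e i ^ N kills v
        have hvN : (e i ^ N) v = 0 := by
          rw [show N = (N - 1) + 1 by omega, pow_succ, Module.End.mul_apply, hv i, map_zero]
        -- expand v in the basis
        have hvsum : (e i ^ N) v = ∑ j ∈ s, (b.repr v) j • (e i ^ N) (b j) := by
          conv_lhs => rw [← b.linearCombination_repr v]
          rw [Finsupp.linearCombination_apply, Finsupp.sum, map_sum]
          exact Finset.sum_congr rfl fun j _ => by rw [map_smul]
        have hcoord : ∑ j ∈ s, (b.repr v) j * (b.repr ((e i ^ N) (b j))) j₁' = (0 : ℂ) := by
          have := congrArg (fun x => (b.repr x) j₁') (hvN ▸ hvsum)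
          simpa [map_sum, Finsupp.finset_sum_apply] using this.symm
        have hfinal : ∑ j ∈ s, (b.repr v) j * (b.repr ((e i ^ N) (b j))) j₁'
            = (b.repr v) j₁ * c₁ := by
          rw [Finset.sum_eq_single j₁]
          · rw [heq₁, map_smul, b.repr_self]
            simp
          · intro j hjs hjne
            by_cases hLj : L j = N
            · obtain ⟨j', hj'it, _, c', _, w', hw', heq'⟩ := iter N 0 j (by omega)
              simp only [pow_zero, Module.End.one_apply] at hw'
              rw [hw', add_zero] at heq'
              have hne : j' ≠ j₁' := by
                intro h
                exact hjne (Finj N j j₁ j₁' (h ▸ hj'it) hj₁'it)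
              rw [heq', map_smul, b.repr_self]
              simp [Finsupp.single_apply, hne]
            · have : L j < N := lt_of_le_of_ne (hN ▸ Finset.le_sup hjs) hLj
              rw [hgt j N this]
              simp
          · intro h
            exact absurd hj₁s h
        rw [hfinal] at hcoord
        have : (b.repr v) j₁ ≠ 0 := Finsupp.mem_support_iff.1 hj₁s
        exact this ((mul_eq_zero.1 hcoord).resolve_right hc₁)
      -- conclude: v lies in the span of the primitive basis vectors
      have : v = ∑ j ∈ (b.repr v).support, (b.repr v) j • b j := by
        conv_lhs => rw [← b.linearCombination_repr v]
        rw [Finsupp.linearCombination_apply, Finsupp.sum]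
      rw [this]
      apply Submodule.sum_mem
      intro j hj
      apply Submodule.smul_mem
      apply Submodule.subset_span
      exact ⟨⟨j, rfl⟩, key j hj⟩
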